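/- Let X be a topological space, Y and Z open subsets with X = Y ∪ Z and Y ∩ Z nonempty, equal to a finite union of maximal path-connected open sets A₁,…,Aₙ. Let 𝒰 and 𝒱 be nerve-consistent open covers of Y and Z respectively. Then the 1-nerve N₁(X, 𝒰 ∪ 𝒱) is isomorphic to the quotient of the disjoint union N₁(Y,𝒰) ⊔ N₁(Z,𝒱) by the relation identifying the vertex v_A in N₁(Y,𝒰) with the vertex v_A in N₁(Z,𝒱) for each A ∈ 𝒰 ∩ 𝒱. -/

import Mathlib

/-- The 1-nerve of a cover `𝒰` of a space: vertices are the members of `𝒰`,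
with an edge between two distinct members whenever they intersect. -/
def Nerve1 {X : Type*} (𝒰 : Set (Set X)) : SimpleGraph 𝒰 where
  Adj A B := A ≠ B ∧ ((A : Set X) ∩ (B : Set X)).Nonempty
  symm := by constructor; rintro A B ⟨hne, x, hx1, hx2⟩; exact ⟨hne.symm, x, hx2, hx1⟩
  loopless := by constructor; rintro A ⟨hne, _⟩; exact hne rfl

/-- The disjoint union of two graphs. -/
def GraphSum {α β : Type*} (G : SimpleGraph α) (H : SimpleGraph β) : SimpleGraph (α ⊕ β) where
  Adj x y :=
    match x, y with
    | Sum.inl a, Sum.inl a' => G.Adj a a'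
    | Sum.inr b, Sum.inr b' => H.Adj b b'
    | _, _ => False
  symm := by
    constructor
    rintro (a | b) (a' | b') h
    · exact G.adj_symm h
    · exact h.elim
    · exact h.elim
    · exact H.adj_symm h
  loopless := by
    constructor
    rintro (a | b) h
    · exact G.loopless.irrefl a h
    · exact H.loopless.irrefl b h

/-- The quotient graph of `G` by an equivalence relation `s` on its vertices:
vertices are the equivalence classes, and distinct classes are adjacent whenever
some edge of `G` joins members of the two classes. -/
def QuotientGraph {α : Type*} (G : SimpleGraph α) (s : Setoid α) :
    SimpleGraph (Quotient s) where
  Adj x y := x ≠ y ∧ ∃ a b : α, Quotient.mk s a = x ∧ Quotient.mk s b = y ∧ G.Adj a b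
  symm := by
    constructor
    rintro x y ⟨hne, a, b, ha, hb, hab⟩
    exact ⟨hne.symm, b, a, hb, ha, G.adj_symm hab⟩
  loopless := by constructor; rintro x ⟨hne, _⟩; exact hne rfl

/-- Gluing theorem: with `X = Y ∪ Z`, `Y ∩ Z` a nonempty finite union of
maximal path-connected open sets `A₁,…,Aₙ`, and nerve-consistent covers `𝒰` of `Y` and
`𝒱` of `Z`, the 1-nerve `N₁(X, 𝒰 ∪ 𝒱)` is isomorphic to the quotient of the disjoint
union `N₁(Y,𝒰) ⊔ N₁(Z,𝒱)` identifying the two copies of each vertex `v_A`, `A ∈ 𝒰 ∩ 𝒱`. -/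
theorem nerve1_glue {X : Type*} [TopologicalSpace X]
    (Y Z : Set X) (hY : IsOpen Y) (hZ : IsOpen Z) (hunion : Y ∪ Z = Set.univ)
    (hne : (Y ∩ Z).Nonempty)
    (n : ℕ) (A : Fin n → Set X)
    (hAopen : ∀ i, IsOpen (A i))
    (hAsub : ∀ i, A i ⊆ Y ∩ Z)
    (hApc : ∀ i, IsPathConnected (A i))
    (hAmax : ∀ i, ∀ B : Set X, A i ⊆ B → B ⊆ Y ∩ Z → IsPathConnected B → B = A i)
    (hAcover : ⋃ i, A i = Y ∩ Z)
    (𝒰 𝒱 : Set (Set X)) (hUfin : 𝒰.Finite) (hVfin : 𝒱.Finite)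
    (hUopen : ∀ U ∈ 𝒰, IsOpen U) (hVopen : ∀ V ∈ 𝒱, IsOpen V)
    (hUcov : ⋃₀ 𝒰 = Y) (hVcov : ⋃₀ 𝒱 = Z)
    -- nerve-consistency:
    (hAin : ∀ i, A i ∈ 𝒰 ∧ A i ∈ 𝒱)
    (hcons : ∀ U ∈ 𝒰, ∀ V ∈ 𝒱, (U ∩ V).Nonempty → U = V ∧ ∃ i, U = A i) :
    Nonempty
      (Nerve1 (𝒰 ∪ 𝒱) ≃g
        QuotientGraph (GraphSum (Nerve1 𝒰) (Nerve1 𝒱))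
          (Setoid.ker (Sum.elim (Subtype.val : 𝒰 → Set X)
            (Subtype.val : 𝒱 → Set X)))) := by
  classical
  set s := Setoid.ker (Sum.elim (Subtype.val : 𝒰 → Set X) (Subtype.val : 𝒱 → Set X)) with hs
  have hmem : ∀ x : ↥𝒰 ⊕ ↥𝒱, Sum.elim (Subtype.val : 𝒰 → Set X) Subtype.val x ∈ 𝒰 ∪ 𝒱 := by
    rintro (U | V)
    · exact Or.inl U.2
    · exact Or.inr V.2
  let g : Quotient s → ↥(𝒰 ∪ 𝒱) :=
    Quotient.lift (fun x => ⟨_, hmem x⟩) (fun a b h => Subtype.ext h)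
  have hginj : Function.Injective g := by
    intro x y
    induction x using Quotient.ind with | _ a =>
    induction y using Quotient.ind with | _ b =>
    intro h
    exact Quotient.sound (congrArg Subtype.val h)
  have hgsurj : Function.Surjective g := by
    rintro ⟨A, hA | hA⟩
    · exact ⟨Quotient.mk s (Sum.inl ⟨A, hA⟩), rfl⟩
    · exact ⟨Quotient.mk s (Sum.inr ⟨A, hA⟩), rfl⟩
  refine ⟨(RelIso.mk (Equiv.ofBijective g ⟨hginj, hgsurj⟩) ?_).symm⟩
  intro x y
  induction x using Quotient.ind with | _ a =>
  induction y using Quotient.ind with | _ b =>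
  show (Nerve1 (𝒰 ∪ 𝒱)).Adj (g (Quotient.mk s a)) (g (Quotient.mk s b)) ↔ _
  constructor
  · rintro ⟨hne', hx⟩
    have hqne : Quotient.mk s a ≠ Quotient.mk s b := fun h => hne' (congrArg g h)
    refine ⟨hqne, ?_⟩
    match a, b with
    | Sum.inl U, Sum.inl U' =>
      have hUU' : U ≠ U' := fun h =>
        hne' (congrArg (fun W => g (Quotient.mk s (Sum.inl W))) h)
      exact ⟨Sum.inl U, Sum.inl U', rfl, rfl, hUU', hx⟩
    | Sum.inl U, Sum.inr V =>
      exact (hne' (Subtype.ext (show ((⟨_, hmem (Sum.inl U)⟩ : ↥(𝒰 ∪ 𝒱)) : Set X) = _ from (hcons U U.2 V V.2 hx).1))).elim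
    | Sum.inr V, Sum.inl U =>
      have hx' : ((U : Set X) ∩ (V : Set X)).Nonempty := by
        obtain ⟨p, hp1, hp2⟩ := hx; exact ⟨p, hp2, hp1⟩
      exact (hne' (Subtype.ext (show ((⟨_, hmem (Sum.inr V)⟩ : ↥(𝒰 ∪ 𝒱)) : Set X) = _ from (hcons U U.2 V V.2 hx').1.symm))).elim
    | Sum.inr V, Sum.inr V' =>
      have hVV' : V ≠ V' := fun h =>
        hne' (congrArg (fun W => g (Quotient.mk s (Sum.inr W))) h)
      exact ⟨Sum.inr V, Sum.inr V', rfl, rfl, hVV', hx⟩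
  · rintro ⟨hq, a', b', ha', hb', hadj⟩
    have hga : g (Quotient.mk s a') = g (Quotient.mk s a) := congrArg g ha'
    have hgb : g (Quotient.mk s b') = g (Quotient.mk s b) := congrArg g hb'
    have hva : Sum.elim (Subtype.val : 𝒰 → Set X) Subtype.val a'
        = Sum.elim (Subtype.val : 𝒰 → Set X) Subtype.val a := congrArg Subtype.val hga
    have hvb : Sum.elim (Subtype.val : 𝒰 → Set X) Subtype.val b'
        = Sum.elim (Subtype.val : 𝒰 → Set X) Subtype.val b := congrArg Subtype.val hgb
    refine ⟨fun h => hq (hginj h), ?_⟩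
    show (Sum.elim (Subtype.val : 𝒰 → Set X) Subtype.val a
        ∩ Sum.elim (Subtype.val : 𝒰 → Set X) Subtype.val b).Nonempty
    rw [← hva, ← hvb]
    match a', b', hadj with
    | Sum.inl U, Sum.inl U', hadj => exact hadj.2
    | Sum.inr V, Sum.inr V', hadj => exact hadj.2
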